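/- With the same p, H, and masses m_j as in the Colin–Colin system, if 1/α = 1/β + 1/γ then Im⟨p(ξ;Y), H Y⟩ = 0 for all (ξ, Y) ∈ ℝ² × ℂ⁶, i.e., the structural condition (b) holds with H = diag(2,2,1,1,1,1). -/

import Mathlib

open Complex

/-- The quadratic nonlinearity of the Colin–Colin laser-plasma model, with
`m₁ = m₂ = 1/(2α)`, `m₃ = m₄ = 1/(2β)`, `m₅ = m₆ = 1/(2γ)`. -/
noncomputable def ccP (α β γ : ℝ) (ξ : ℝ × ℝ) (Y : Fin 6 → ℂ) : Fin 6 → ℂ :=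
  let m1 : ℂ := 1 / (2 * (α : ℂ))
  let m3 : ℂ := 1 / (2 * (β : ℂ))
  let m5 : ℂ := 1 / (2 * (γ : ℂ))
  ![ -Complex.I * (m5 * ξ.1 * Y 4 + m5 * ξ.2 * Y 5) * Y 2,
     -Complex.I * (m5 * ξ.1 * Y 4 + m5 * ξ.2 * Y 5) * Y 3,
     Complex.I * (m5 * ξ.1 * (starRingEnd ℂ) (Y 4) + m5 * ξ.2 * (starRingEnd ℂ) (Y 5)) * Y 0,
     Complex.I * (m5 * ξ.1 * (starRingEnd ℂ) (Y 4) + m5 * ξ.2 * (starRingEnd ℂ) (Y 5)) * Y 1,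
     Complex.I * ξ.1 * ((m1 - m3) * Y 0 * (starRingEnd ℂ) (Y 2)
        + (m1 - m3) * Y 1 * (starRingEnd ℂ) (Y 3)),
     Complex.I * ξ.2 * ((m1 - m3) * Y 0 * (starRingEnd ℂ) (Y 2)
        + (m1 - m3) * Y 1 * (starRingEnd ℂ) (Y 3)) ]

/-- The diagonal weights of `H = diag(2,2,1,1,1,1)`. -/
noncomputable def ccH : Fin 6 → ℂ := ![2, 2, 1, 1, 1, 1]

/-- If `1/α = 1/β + 1/γ` then `Im⟨p(ξ;Y), HY⟩ = 0` for all `(ξ,Y)`: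
the structural condition (b) holds for the Colin–Colin system with
`H = diag(2,2,1,1,1,1)`. -/
theorem colin_colin_condition_b (α β γ : ℝ) (hα : α ≠ 0) (hβ : β ≠ 0) (hγ : γ ≠ 0)
    (hres : 1 / α = 1 / β + 1 / γ) :
    ∀ (ξ : ℝ × ℝ) (Y : Fin 6 → ℂ),
      (∑ j, ccP α β γ ξ Y j * (starRingEnd ℂ) (ccH j * Y j)).im = 0 := by
  have hαc : (α : ℂ) ≠ 0 := by exact_mod_cast hα
  have hβc : (β : ℂ) ≠ 0 := by exact_mod_cast hβ
  have hγc : (γ : ℂ) ≠ 0 := by exact_mod_cast hγ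
  have hc : (1 : ℂ) / (2 * (α : ℂ)) - 1 / (2 * (β : ℂ)) = 1 / (2 * (γ : ℂ)) := by
    have h : (1 : ℂ) / α = 1 / β + 1 / γ := by exact_mod_cast hres
    field_simp at h ⊢
    linear_combination h
  intro ξ Y
  rw [← Complex.conj_eq_iff_im]
  simp only [ccP, ccH, Fin.sum_univ_six, Matrix.cons_val_zero, Matrix.cons_val_one,
    Matrix.head_cons, Matrix.cons_val_two, Matrix.tail_cons, Matrix.cons_val_three,
    Matrix.cons_val_four, Matrix.cons_val_fin_one, Matrix.cons_val', Matrix.empty_val',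
    map_add, map_mul, map_sub, map_neg, map_div₀, map_one, map_ofNat, Complex.conj_I,
    Complex.conj_ofReal, Complex.conj_conj, show (5 : Fin 6) = Fin.succ 4 from rfl,
    Matrix.cons_val_succ]
  simp only [show (Fin.succ 4 : Fin 6) = 5 from rfl]
  set a : ℂ := (ξ.1 : ℂ) * Y 4 + (ξ.2 : ℂ) * Y 5 with ha
  set b : ℂ := Y 0 * (starRingEnd ℂ) (Y 2) + Y 1 * (starRingEnd ℂ) (Y 3) with hb
  linear_combination (-Complex.I *
    (((ξ.1 : ℂ) * Y 4 + (ξ.2 : ℂ) * Y 5) *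
        ((starRingEnd ℂ) (Y 0) * Y 2 + (starRingEnd ℂ) (Y 1) * Y 3)
      + ((ξ.1 : ℂ) * (starRingEnd ℂ) (Y 4) + (ξ.2 : ℂ) * (starRingEnd ℂ) (Y 5)) *
        (Y 0 * (starRingEnd ℂ) (Y 2) + Y 1 * (starRingEnd ℂ) (Y 3)))) * hc
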